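/- arXiv:1707.03947 — 4 statements merged into one kernel-verified Lean document; each statement's English description precedes it below -/
import Mathlib

section
/- There exists a Δ⁰₂ (limit computable) set R ⊆ ℕ which is canonically immune. -/
/-- The `e`-th computably enumerable set. -/
def WSet (e : ℕ) : Set ℕ := {n | ((Denumerable.ofNat Nat.Partrec.Code e).eval n).Dom}

/-- A canonical numbering: a computable surjection onto the finite subsets of `ℕ`. -/
def CanonicalNumbering (D : ℕ → Finset ℕ) : Prop := Computable D ∧ Function.Surjective D

/-- `R` is canonically immune with modulus of immunity `h`. -/
def CanonImmuneMod (R : Set ℕ) (h : ℕ → ℕ) : Prop :=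
  R.Infinite ∧ ∀ D : ℕ → Finset ℕ, CanonicalNumbering D →
    ∀ᶠ i in Filter.atTop, ↑(D i) ⊆ R → (D i).card ≤ h i

/-- `R` is canonically immune. -/
def CanonicallyImmune (R : Set ℕ) : Prop :=
  ∃ h : ℕ → ℕ, Computable h ∧ CanonImmuneMod R h

/-- `R` is Δ⁰₂ (limit computable). -/
def Delta02 (R : Set ℕ) : Prop :=
  ∃ f : ℕ → ℕ → Bool, Computable₂ f ∧
    ∀ n, ∀ᶠ s in Filter.atTop, (f s n = true ↔ n ∈ R)

/-- Partial functions recursive in an oracle `O : ℕ → ℕ`. -/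
inductive RecursiveInOracle (O : ℕ → ℕ) : (ℕ →. ℕ) → Prop
  | zero : RecursiveInOracle O fun _ => 0
  | succ : RecursiveInOracle O fun n => Part.some (n + 1)
  | left : RecursiveInOracle O fun n => Part.some (Nat.unpair n).1
  | right : RecursiveInOracle O fun n => Part.some (Nat.unpair n).2
  | oracle : RecursiveInOracle O fun n => Part.some (O n)
  | pair {f g} : RecursiveInOracle O f → RecursiveInOracle O g →
      RecursiveInOracle O fun n => Nat.pair <$> f n <*> g n
  | comp {f g} : RecursiveInOracle O f → RecursiveInOracle O g →
      RecursiveInOracle O fun n => g n >>= f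
  | prec {f g} : RecursiveInOracle O f → RecursiveInOracle O g →
      RecursiveInOracle O (Nat.unpaired fun a n =>
        n.rec (f a) fun y IH => do let i ← IH; g (Nat.pair a (Nat.pair y i)))
  | rfind {f} : RecursiveInOracle O f →
      RecursiveInOracle O fun a => Nat.rfind fun n => (fun m => m = 0) <$> f (Nat.pair a n)

open Classical in
/-- Characteristic function of a set of naturals. -/
noncomputable def chi (A : Set ℕ) : ℕ → ℕ := fun n => if n ∈ A then 1 else 0

/-- `A` is Turing reducible to the oracle `O`. -/
def TuringReducibleTo (A : Set ℕ) (O : ℕ → ℕ) : Prop :=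
  RecursiveInOracle O fun n => Part.some (chi A n)

/-- `A` is Turing reducible to the set `B`. -/
def TuringReducibleSet (A B : Set ℕ) : Prop := TuringReducibleTo A (chi B)

/-- The oracle given by a real `G ∈ 2^ω`. -/
def oracleOf (G : ℕ → Bool) : ℕ → ℕ := fun n => cond (G n) 1 0

/-- `S` is computably enumerable relative to the real `G`. -/
def CEIn (G : ℕ → Bool) (S : Set ℕ) : Prop :=
  ∃ f : ℕ →. ℕ, RecursiveInOracle (oracleOf G) f ∧ S = {n | (f n).Dom}

/-- The length-`n` initial segment of a real. -/
def initSeg (G : ℕ → Bool) (n : ℕ) : List Bool := List.ofFn fun i : Fin n => G i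

/-- A Σ⁰₂ set of binary strings. -/
def Sigma02Strings (X : Set (List Bool)) : Prop :=
  ∃ p : List Bool → ℕ → ℕ → Bool,
    (Computable fun x : List Bool × ℕ × ℕ => p x.1 x.2.1 x.2.2) ∧
    X = {σ | ∃ m, ∀ k, p σ m k = true}

/-- A (Cohen) 2-generic real. -/
def TwoGeneric (G : ℕ → Bool) : Prop :=
  ∀ X : Set (List Bool), Sigma02Strings X →
    (∃ n, initSeg G n ∈ X) ∨ (∃ n, ∀ τ, initSeg G n <+: τ → τ ∉ X)

/-- A computably enumerable set of binary strings. -/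
def CEStrings (X : Set (List Bool)) : Prop :=
  ∃ p : List Bool → ℕ → Bool, Computable₂ p ∧ X = {σ | ∃ s, p σ s = true}

/-- A dense set of binary strings. -/
def DenseStrings (X : Set (List Bool)) : Prop := ∀ σ, ∃ τ, σ <+: τ ∧ τ ∈ X

/-- A weakly 1-generic real. -/
def Weakly1Generic (G : ℕ → Bool) : Prop :=
  ∀ X : Set (List Bool), CEStrings X → DenseStrings X → ∃ n, initSeg G n ∈ X

/-- A hyperimmune set: infinite and its increasing enumeration (principal function)
is not dominated by any computable function. -/
def Hyperimmune (R : Set ℕ) : Prop :=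
  R.Infinite ∧ ∀ f : ℕ → ℕ, Computable f →
    ∃ᶠ n in Filter.atTop, f n < Nat.nth (· ∈ R) n

/-- A (computable) Mathias condition `[a, A]`. -/
structure MathiasCond where
  a : Finset ℕ
  A : Set ℕ
  infinite : A.Infinite
  comp : ComputablePred (· ∈ A)
  lt : ∀ x ∈ a, ∀ y ∈ A, x < y

/-- `c'` extends `c` as a Mathias condition. -/
def MathiasCond.Extends (c' c : MathiasCond) : Prop :=
  c.a ⊆ c'.a ∧ (↑c'.a \ ↑c.a : Set ℕ) ⊆ c.A ∧ c'.A ⊆ c.A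

/-- A dense family of Mathias conditions. -/
def MathiasDense (𝒳 : Set MathiasCond) : Prop := ∀ c, ∃ c' ∈ 𝒳, c'.Extends c

/-- `R ∈ [a, A]`. -/
def MathiasCond.Mem (c : MathiasCond) (R : Set ℕ) : Prop :=
  ↑c.a ⊆ R ∧ R ⊆ ↑c.a ∪ c.A

/-- `R` meets the family `𝒳` of Mathias conditions. -/
def Meets (R : Set ℕ) (𝒳 : Set MathiasCond) : Prop := ∃ c ∈ 𝒳, c.Mem R

/-- The arithmetical sets of naturals: closure of the computable sets under
complementation and projection. -/
inductive Arithmetical : Set ℕ → Prop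
  | of_computable {S : Set ℕ} : ComputablePred (· ∈ S) → Arithmetical S
  | compl {S : Set ℕ} : Arithmetical S → Arithmetical {n | n ∉ S}
  | proj {S : Set ℕ} : Arithmetical S → Arithmetical {n | ∃ m, Nat.pair n m ∈ S}

open Classical in
/-- `n` codes the Mathias condition `c`: its first component is the canonical code of the
finite set and its second component is an index for the characteristic function of `A`. -/
noncomputable def CondCode (n : ℕ) (c : MathiasCond) : Prop :=
  n.unpair.1 = Encodable.encode c.a ∧
  ∀ x, ((Denumerable.ofNat Nat.Partrec.Code n.unpair.2)).eval x = Part.some (if x ∈ c.A then 1 else 0)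

/-- The set of codes of members of `𝒳`. -/
def CodesOf (𝒳 : Set MathiasCond) : Set ℕ := {n | ∃ c ∈ 𝒳, CondCode n c}

/-- A Mathias generic real: one meeting every arithmetically definable dense family
of Mathias conditions. -/
def MathiasGeneric (R : Set ℕ) : Prop :=
  ∀ 𝒳 : Set MathiasCond, Arithmetical (CodesOf 𝒳) → MathiasDense 𝒳 → Meets R 𝒳

/-- A Σ⁰₃ set of naturals. -/
def Sigma03Set (S : Set ℕ) : Prop :=
  ∃ p : ℕ → ℕ → ℕ → ℕ → Bool,
    (Computable fun x : ℕ × ℕ × ℕ × ℕ => p x.1 x.2.1 x.2.2.1 x.2.2.2) ∧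
    S = {n | ∃ a, ∀ b, ∃ c, p n a b c = true}

/-- A Mathias 3-generic real. -/
def Mathias3Generic (R : Set ℕ) : Prop :=
  ∀ 𝒳 : Set MathiasCond, Sigma03Set (CodesOf 𝒳) → MathiasDense 𝒳 → Meets R 𝒳

/-- An effectively immune set. -/
def EffectivelyImmune (Q : Set ℕ) : Prop :=
  Q.Infinite ∧ ∃ h : ℕ → ℕ, Computable h ∧
    ∀ e, WSet e ⊆ Q → (WSet e).Finite ∧ (WSet e).ncard ≤ h e

/-- The basic cylinder of 2^ω determined by the finite string `σ`. -/
def Cyl (σ : List Bool) : Set (ℕ → Bool) := {G | ∀ i : Fin σ.length, G i = σ.get i}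

/-- The open subset of 2^ω generated by a set of strings. -/
def OpenFrom (P : Set (List Bool)) : Set (ℕ → Bool) := ⋃ σ ∈ P, Cyl σ

/-- A uniformly c.e. sequence of sets of strings. -/
def UniformlyCE (P : ℕ → Set (List Bool)) : Prop :=
  ∃ f : ℕ → List Bool → ℕ → Bool,
    (Computable fun x : ℕ × List Bool × ℕ => f x.1 x.2.1 x.2.2) ∧
    ∀ n σ, σ ∈ P n ↔ ∃ s, f n σ s = true

/-- `μ` is the uniform (fair-coin) product measure on 2^ω: every basic cylinder
determined by a string of length `l` has measure `2⁻ˡ`. -/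
def IsFairCoin (μ : MeasureTheory.Measure (ℕ → Bool)) : Prop :=
  ∀ σ : List Bool, μ (Cyl σ) = (2 ^ σ.length : ENNReal)⁻¹

/-- A Schnorr test with respect to the measure `μ`: uniformly c.e. open sets with
uniformly computable measures bounded by `2^{-n}`. -/
def SchnorrTest (μ : MeasureTheory.Measure (ℕ → Bool)) (U : ℕ → Set (ℕ → Bool)) : Prop :=
  (∃ P : ℕ → Set (List Bool), UniformlyCE P ∧ ∀ n, U n = OpenFrom (P n)) ∧
  (∃ q : ℕ → ℕ → ℚ, Computable₂ q ∧
    ∀ n k, |(q n k : ℝ) - (μ (U n)).toReal| ≤ (2 : ℝ)⁻¹ ^ k) ∧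
  ∀ n, μ (U n) ≤ (2 ^ n : ENNReal)⁻¹

/-- A Schnorr random real (with respect to the fair-coin measure `μ`). -/
def SchnorrRandom (μ : MeasureTheory.Measure (ℕ → Bool)) (G : ℕ → Bool) : Prop :=
  ∀ U : ℕ → Set (ℕ → Bool), SchnorrTest μ U → G ∉ ⋂ n, U n

open Classical in
/-- The characteristic sequence of a set of naturals, as a point of 2^ω. -/
noncomputable def chiB (R : Set ℕ) : ℕ → Bool := fun n => decide (n ∈ R)


/-! ### Auxiliary construction: a limit-computable function dominating all
computable functions; its range is the desired set. -/

open Nat.Partrec (Code)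

open Classical in
/-- Value of the `e`-th partial computable function at `m`, with default 0. -/
noncomputable def gval (e m : ℕ) : ℕ :=
  if h : ((Denumerable.ofNat Code e).eval m).Dom
  then ((Denumerable.ofNat Code e).eval m).get h else 0

/-- Stage-`s` approximation to `gval`. -/
def gs (s e m : ℕ) : ℕ :=
  (Nat.Partrec.Code.evaln s (Denumerable.ofNat Code e) m).getD 0

/-- A fast-growing function dominating all computable functions. -/
noncomputable def pfun (n : ℕ) : ℕ :=
  n + 1 + ∑ e ∈ Finset.range (n + 1), ∑ m ∈ Finset.range (n + 1), gval e m

/-- Stage-`s` approximation to `pfun`. -/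
def pfunS (s n : ℕ) : ℕ :=
  n + 1 + ∑ e ∈ Finset.range (n + 1), ∑ m ∈ Finset.range (n + 1), gs s e m

lemma pfun_strictMono : StrictMono pfun := by
  apply strictMono_nat_of_lt_succ
  intro n
  have h1 : ∑ e ∈ Finset.range (n + 1), ∑ m ∈ Finset.range (n + 1), gval e m ≤
      ∑ e ∈ Finset.range (n + 1 + 1), ∑ m ∈ Finset.range (n + 1 + 1), gval e m := by
    refine le_trans (Finset.sum_le_sum fun e _ => ?_)
      (Finset.sum_le_sum_of_subset (by simp [Finset.range_subset]; intro x hx; omega))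
    exact Finset.sum_le_sum_of_subset (by simp [Finset.range_subset]; intro x hx; omega)
  simp only [pfun]
  omega

lemma lt_pfun_self (n : ℕ) : n < pfun n := by
  simp only [pfun]; omega

lemma pfun_dominates {f : ℕ → ℕ} (hf : Computable f) : ∃ N, ∀ n ≥ N, f n < pfun n := by
  have h1 : Nat.Partrec (fun n => Part.some (f n)) := Partrec.nat_iff.1 hf
  obtain ⟨c, hc⟩ := Nat.Partrec.Code.exists_code.1 h1
  refine ⟨Encodable.encode c, fun n hn => ?_⟩
  have hg : gval (Encodable.encode c) n = f n := by
    have h1 : (Denumerable.ofNat Code (Encodable.encode c)).eval n = Part.some (f n) := by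
      rw [Denumerable.ofNat_encode, hc]
    simp [gval, h1, hc]
  have h2 : gval (Encodable.encode c) n ≤
      ∑ m ∈ Finset.range (n + 1), gval (Encodable.encode c) m :=
    Finset.single_le_sum (fun i _ => Nat.zero_le _) (by simp)
  have h3 : ∑ m ∈ Finset.range (n + 1), gval (Encodable.encode c) m ≤
      ∑ e ∈ Finset.range (n + 1), ∑ m ∈ Finset.range (n + 1), gval e m :=
    Finset.single_le_sum (f := fun e => ∑ m ∈ Finset.range (n + 1), gval e m)
      (fun i _ => Nat.zero_le _) (by simp; omega)
  have : f n ≤ ∑ e ∈ Finset.range (n + 1), ∑ m ∈ Finset.range (n + 1), gval e m := by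
    rw [← hg]; exact le_trans h2 h3
  simp only [pfun]; omega

lemma gs_eventually (e m : ℕ) : ∃ S, ∀ s ≥ S, gs s e m = gval e m := by
  by_cases h : ((Denumerable.ofNat Code e).eval m).Dom
  · set x := ((Denumerable.ofNat Code e).eval m).get h with hx
    have hmem : x ∈ (Denumerable.ofNat Code e).eval m := Part.get_mem h
    obtain ⟨k, hk⟩ := Nat.Partrec.Code.evaln_complete.1 hmem
    refine ⟨k, fun s hs => ?_⟩
    have : x ∈ Nat.Partrec.Code.evaln s (Denumerable.ofNat Code e) m :=
      Nat.Partrec.Code.evaln_mono hs hk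
    simp only [gs, Option.mem_def.1 this]
    simp [gval, h]
    exact hx
  · refine ⟨0, fun s _ => ?_⟩
    have hnone : Nat.Partrec.Code.evaln s (Denumerable.ofNat Code e) m = none := by
      rcases ho : Nat.Partrec.Code.evaln s (Denumerable.ofNat Code e) m with _ | y
      · rfl
      · exact absurd (Part.dom_iff_mem.2 ⟨y, Nat.Partrec.Code.evaln_sound ho⟩) h
    simp [gs, hnone, gval, h]

lemma pfunS_eventually (n : ℕ) : ∃ S, ∀ s ≥ S, pfunS s n = pfun n := by
  have h := fun e m => gs_eventually e m
  classical
  refine ⟨(Finset.range (n + 1)).sup fun e =>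
    (Finset.range (n + 1)).sup fun m => Classical.choose (h e m), fun s hs => ?_⟩
  simp only [pfunS, pfun]
  congr 1
  refine Finset.sum_congr rfl fun e he => Finset.sum_congr rfl fun m hm => ?_
  refine Classical.choose_spec (h e m) s (le_trans ?_ hs)
  exact le_trans (Finset.le_sup (f := fun m => Classical.choose (h e m)) hm)
    (Finset.le_sup (f := fun e => (Finset.range (n + 1)).sup fun m => Classical.choose (h e m)) he)

lemma add_le_pair (a b : ℕ) : a + b ≤ Nat.pair a b := by
  rw [Nat.pair]; split <;> nlinarith

lemma sum_len_le_encode_list : ∀ l : List ℕ, l.sum + l.length ≤ Encodable.encode l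
  | [] => by simp
  | (a :: l) => by
    have ih := sum_len_le_encode_list l
    rw [Encodable.encode_list_cons]
    have h := add_le_pair (Encodable.encode a) (Encodable.encode l)
    simp only [Encodable.encode_nat] at h ⊢
    simp only [List.sum_cons, List.length_cons]
    omega

lemma mem_raise'_le : ∀ (l : List ℕ) (n x : ℕ), x ∈ Denumerable.raise' l n →
    x + 1 ≤ n + l.sum + l.length
  | [], _, _, h => by simp [Denumerable.raise'] at h
  | (m :: l), n, x, h => by
    rw [Denumerable.raise'] at h
    rcases List.mem_cons.1 h with h | h
    · subst h; simp; omega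
    · have := mem_raise'_le l (m + n + 1) x h
      simp only [List.sum_cons, List.length_cons]
      omega

lemma mem_lt_encode_finset (s : Finset ℕ) (x : ℕ) (hx : x ∈ s) :
    x < @Encodable.encode (Finset ℕ) Primcodable.toEncodable s := by
  have henc : @Encodable.encode (Finset ℕ) Primcodable.toEncodable s =
      Encodable.encode
        (Denumerable.lower' ((s.map (Denumerable.eqv ℕ).toEmbedding).sort (· ≤ ·)) 0) := rfl
  set L := (s.map (Denumerable.eqv ℕ).toEmbedding).sort (· ≤ ·) with hLdef
  have hL : Denumerable.raise' (Denumerable.lower' L 0) 0 = L :=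
    Denumerable.raise_lower' (fun m _ => Nat.zero_le m) (Finset.sortedLT_sort _)
  have hxL : x ∈ L := by
    rw [hLdef, Finset.mem_sort]
    exact Finset.mem_map.2 ⟨x, hx, by simp [Denumerable.eqv]⟩
  rw [← hL] at hxL
  have h1 := mem_raise'_le _ _ _ hxL
  have h2 := sum_len_le_encode_list (Denumerable.lower' L 0)
  omega

lemma immunity {D : ℕ → Finset ℕ} (hD : Computable D) :
    ∀ᶠ i in Filter.atTop, ↑(D i) ⊆ Set.range pfun → (D i).card ≤ i := by
  classical
  have hf : Computable fun i => @Encodable.encode (Finset ℕ) Primcodable.toEncodable (D i) :=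
    Computable.encode.comp hD
  obtain ⟨N, hN⟩ := pfun_dominates hf
  rw [Filter.eventually_atTop]
  refine ⟨N, fun i hi hsub => ?_⟩
  by_contra hcard
  push_neg at hcard
  set g := Function.invFun pfun with hg
  have hginv : ∀ x ∈ D i, pfun (g x) = x := by
    intro x hx
    exact Function.invFun_eq (hsub hx)
  have hinj : Set.InjOn g (D i) := by
    intro x hx y hy hxy
    rw [← hginv x hx, ← hginv y hy, hxy]
  have hcardim : ((D i).image g).card = (D i).card := Finset.card_image_of_injOn hinj
  have : ∃ k ∈ (D i).image g, i ≤ k := by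
    by_contra hall
    push_neg at hall
    have hsubr : (D i).image g ⊆ Finset.range i := fun k hk => Finset.mem_range.2 (hall k hk)
    have := Finset.card_le_card hsubr
    rw [hcardim] at this
    simp at this
    omega
  obtain ⟨k, hk, hik⟩ := this
  obtain ⟨x, hx, hkx⟩ := Finset.mem_image.1 hk
  have h1 : pfun i ≤ x := by
    calc pfun i ≤ pfun k := pfun_strictMono.monotone hik
    _ = pfun (g x) := by rw [hkx]
    _ = x := hginv x hx
  have h2 : x < pfun i :=
    lt_trans (mem_lt_encode_finset _ _ hx) (hN i hi)
  omega

lemma sum_range_eq (g : ℕ → ℕ) (k : ℕ) :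
    ∑ i ∈ Finset.range k, g i = ((List.range k).map g).sum := by
  induction k with
  | zero => simp
  | succ k ih => rw [Finset.sum_range_succ, List.range_succ]; simp [ih]

lemma pfunS_eq (s n : ℕ) : pfunS s n =
    (n + 1) + ((List.range (n + 1)).map
      (fun e => ((List.range (n + 1)).map (fun m => gs s e m)).sum)).sum := by
  simp [pfunS, sum_range_eq]

lemma primrec_list_sum : Primrec (List.sum : List ℕ → ℕ) := by
  have h : Primrec fun l : List ℕ => l.foldr (fun b s => b + s) 0 :=
    Primrec.list_foldr Primrec.id (Primrec.const 0)
      ((Primrec.nat_add.comp (Primrec.fst.comp Primrec.snd)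
        (Primrec.snd.comp Primrec.snd)).to₂)
  exact h.of_eq fun l => (List.sum_eq_foldr (l := l)) ▸ rfl

lemma primrec_gs : Primrec fun p : (ℕ × ℕ) × ℕ => gs p.1.1 p.1.2 p.2 := by
  have h1 : Primrec fun p : (ℕ × ℕ) × ℕ =>
      Nat.Partrec.Code.evaln p.1.1 (Denumerable.ofNat Code p.1.2) p.2 :=
    Nat.Partrec.Code.primrec_evaln.comp
      (((Primrec.fst.comp Primrec.fst).pair
        ((Primrec.ofNat Code).comp (Primrec.snd.comp Primrec.fst))).pair Primrec.snd)
  exact Primrec.option_getD.comp h1 (Primrec.const 0)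

lemma primrec_pfunS : Primrec₂ pfunS := by
  have hg : Primrec fun q : ((ℕ × ℕ) × ℕ) × ℕ => gs q.1.1.1 q.1.2 q.2 :=
    primrec_gs.comp (((Primrec.fst.comp (Primrec.fst.comp Primrec.fst)).pair
      (Primrec.snd.comp Primrec.fst)).pair Primrec.snd)
  have hinner : Primrec fun a : (ℕ × ℕ) × ℕ =>
      ((List.range (a.1.2 + 1)).map (fun m => gs a.1.1 a.2 m)).sum :=
    primrec_list_sum.comp (Primrec.list_map
      (Primrec.list_range.comp (Primrec.succ.comp (Primrec.snd.comp Primrec.fst))) hg.to₂)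
  have houter : Primrec fun p : ℕ × ℕ =>
      ((List.range (p.2 + 1)).map
        (fun e => ((List.range (p.2 + 1)).map (fun m => gs p.1 e m)).sum)).sum :=
    primrec_list_sum.comp
      (Primrec.list_map (Primrec.list_range.comp (Primrec.succ.comp Primrec.snd))
        hinner.to₂)
  have hadd := Primrec.nat_add.comp (Primrec.succ.comp (Primrec.snd (α := ℕ) (β := ℕ))) houter
  exact (hadd.of_eq fun p => (pfunS_eq p.1 p.2).symm).to₂

/-- Stage-`s` guess at membership of `n` in the range of `pfun`. -/
def fapp (s n : ℕ) : Bool :=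
  (List.range n).foldr (fun k acc => (decide (pfunS s k = n)) || acc) false

lemma primrec_fapp : Primrec₂ fapp := by
  have hor : Primrec₂ fun (p : ℕ × ℕ) (q : ℕ × Bool) =>
      (decide (pfunS p.1 q.1 = p.2)) || q.2 := by
    have hd : Primrec fun x : (ℕ × ℕ) × ℕ × Bool => decide (pfunS x.1.1 x.2.1 = x.1.2) :=
      PrimrecPred.decide (Primrec.eq.comp
        (primrec_pfunS.comp (Primrec.fst.comp Primrec.fst) (Primrec.fst.comp Primrec.snd))
        (Primrec.snd.comp Primrec.fst))
    exact (Primrec.cond hd (Primrec.const true) (Primrec.snd.comp Primrec.snd)).of_eq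
      (fun x => by cases h : decide (pfunS x.1.1 x.2.1 = x.1.2) <;> simp [h])
  have h := Primrec.list_foldr (Primrec.list_range.comp (Primrec.snd (α := ℕ) (β := ℕ)))
    (Primrec.const false) hor
  exact (h.of_eq fun p => rfl).to₂

lemma foldr_or_iff (q : ℕ → Bool) : ∀ l : List ℕ,
    (l.foldr (fun k acc => q k || acc) false = true ↔ ∃ k ∈ l, q k = true)
  | [] => by simp
  | (a :: l) => by simp [foldr_or_iff q l]

lemma fapp_iff (s n : ℕ) : fapp s n = true ↔ ∃ k < n, pfunS s k = n := by
  rw [fapp, foldr_or_iff]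
  simp


/-- There is a Δ⁰₂ set `R ⊆ ω` which is canonically immune. -/
theorem exists_delta02_canonically_immune :
    ∃ R : Set ℕ, Delta02 R ∧ CanonicallyImmune R := by
  classical
  refine ⟨Set.range pfun, ⟨fapp, primrec_fapp.to_comp, fun n => ?_⟩,
    ⟨id, Computable.id, Set.infinite_range_of_injective pfun_strictMono.injective,
      fun D hD => immunity hD.1⟩⟩
  have h := fun k => pfunS_eventually k
  refine Filter.eventually_atTop.2
    ⟨(Finset.range n).sup fun k => Classical.choose (h k), fun s hs => ?_⟩
  have heq : ∀ k < n, pfunS s k = pfun k := fun k hk =>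
    Classical.choose_spec (h k) s (le_trans
      (Finset.le_sup (f := fun k => Classical.choose (h k)) (Finset.mem_range.2 hk)) hs)
  rw [fapp_iff]
  constructor
  · rintro ⟨k, hk, hpk⟩
    exact ⟨k, by rw [← heq k hk]; exact hpk⟩
  · rintro ⟨k, hpk⟩
    have hkn : k < n := by have := lt_pfun_self k; omega
    exact ⟨k, hkn, by rw [heq k hkn, hpk]⟩
end

section
/- There exists a set R ⊆ ℕ which is canonically immune such that neither R nor its complement ℕ \ R is hyperimmune. -/
namespace CINH
open MeasureTheory

abbrev X : Type := ℕ → ZMod 2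

noncomputable def K0 : TopologicalSpace.PositiveCompacts X :=
  ⟨⟨Set.univ, isCompact_univ⟩, by simp⟩

noncomputable def mu : Measure X := Measure.addHaarMeasure K0

instance : mu.IsAddLeftInvariant := Measure.isAddLeftInvariant_addHaarMeasure K0

lemma mu_univ : mu Set.univ = 1 := by
  have := Measure.addHaarMeasure_self (K₀ := K0)
  simpa [mu, K0] using this


/-- cylinder on finite set s with values τ -/
def Cy (s : Finset ℕ) (τ : ℕ → ZMod 2) : Set X := {G | ∀ x ∈ s, G x = τ x}

lemma Cy_meas (s : Finset ℕ) (τ : ℕ → ZMod 2) : MeasurableSet (Cy s τ) := by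
  have : Cy s τ = ⋂ x ∈ s, (fun G : X => G x) ⁻¹' {τ x} := by
    ext G; simp [Cy]
  rw [this]
  exact MeasurableSet.biInter s.countable_toSet fun x _ =>
    (measurable_pi_apply x) (measurableSet_singleton _)

lemma Cy_translate (s : Finset ℕ) (τ : ℕ → ZMod 2) :
    mu (Cy s τ) = mu (Cy s 0) := by
  have : Cy s τ = ((fun x => if x ∈ s then τ x else 0) + ·) ⁻¹' (Cy s 0) := by
    ext G
    simp only [Cy, Set.mem_preimage, Set.mem_setOf_eq, Pi.add_apply, Pi.zero_apply]
    constructor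
    · intro h x hx; rw [if_pos hx, h x hx]; exact CharTwo.add_self_eq_zero _
    · intro h x hx
      have := h x hx
      rw [if_pos hx] at this
      have h2 := eq_neg_of_add_eq_zero_right this
      rwa [CharTwo.neg_eq] at h2
  rw [this, measure_preimage_add]

lemma mu_Cy (s : Finset ℕ) (τ : ℕ → ZMod 2) :
    mu (Cy s τ) = ((2 : ENNReal) ^ s.card)⁻¹ := by
  classical
  set ext : (↥s → ZMod 2) → (ℕ → ZMod 2) :=
    fun v x => if h : x ∈ s then v ⟨x, h⟩ else 0 with hext
  have hdisj : Pairwise (Function.onFun Disjoint fun v : ↥s → ZMod 2 => Cy s (ext v)) := by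
    intro v w hvw
    rw [Function.onFun, Set.disjoint_left]
    rintro G hG hG'
    apply hvw
    funext x
    have h1 := hG x.1 x.2
    have h2 := hG' x.1 x.2
    simp only [hext, dif_pos x.2] at h1 h2
    exact h1.symm.trans h2
  have hcover : (⋃ v : ↥s → ZMod 2, Cy s (ext v)) = Set.univ := by
    ext G
    simp only [Set.mem_iUnion, Set.mem_univ, iff_true]
    exact ⟨fun x => G x.1, fun x hx => by simp [hext, hx]⟩
  have hsum := measure_iUnion (μ := mu) hdisj (fun v => Cy_meas s (ext v))
  rw [hcover, mu_univ] at hsum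
  have hconst : ∀ v : ↥s → ZMod 2, mu (Cy s (ext v)) = mu (Cy s τ) := by
    intro v; rw [Cy_translate s (ext v), Cy_translate s τ]
  rw [tsum_congr hconst, tsum_fintype] at hsum
  simp only [Finset.sum_const, Finset.card_univ, nsmul_eq_mul] at hsum
  have hcard : (Fintype.card (↥s → ZMod 2)) = 2 ^ s.card := by
    rw [Fintype.card_fun]; simp [Fintype.card_coe]
  rw [hcard] at hsum
  have h2 : ((2 : ENNReal) ^ s.card) ≠ 0 := by positivity
  have h2' : ((2 : ENNReal) ^ s.card) ≠ ⊤ := by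
    exact ENNReal.pow_ne_top (by norm_num)
  push_cast at hsum
  rw [eq_comm] at hsum
  have := (ENNReal.eq_div_iff h2 h2').mpr hsum
  rw [this, one_div]

open Filter in
lemma not_mem_limsup {s : ℕ → Set X} {G : X} (h : G ∉ limsup s atTop) :
    ∀ᶠ i in atTop, G ∉ s i := by
  rw [limsup_eq_iInf_iSup_of_nat] at h
  simp only [Set.iInf_eq_iInter, Set.iSup_eq_iUnion, Set.mem_iInter, Set.mem_iUnion,
    not_forall, not_exists] at h
  obtain ⟨N, hN⟩ := h
  exact Filter.eventually_atTop.2 ⟨N, fun i hi => hN i hi⟩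

lemma geom_ne_top : (∑' n : ℕ, ((2 : ENNReal)⁻¹) ^ n) ≠ ⊤ := by
  rw [ENNReal.tsum_geometric]
  simp [ENNReal.one_sub_inv_two]

open Filter in
lemma limsup_null {s : ℕ → Set X} (h : ∀ n, mu (s n) ≤ (2 : ENNReal)⁻¹ ^ n) :
    mu (limsup s atTop) = 0 := by
  apply measure_limsup_atTop_eq_zero
  exact ((ENNReal.tsum_le_tsum h).trans_lt (lt_of_le_of_ne le_top geom_ne_top)).ne

lemma zmod2_ne_iff : ∀ {z b : ZMod 2}, z ≠ b ↔ z = b + 1 := by decide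

lemma fin_null (b : ZMod 2) : mu {G : X | {n | G n = b}.Finite} = 0 := by
  have Tnull : ∀ N : ℕ, mu {G : X | ∀ n, N ≤ n → G n = b + 1} = 0 := by
    intro N
    by_contra h0
    obtain ⟨k, hk⟩ := ENNReal.exists_inv_two_pow_lt h0
    have hsub : {G : X | ∀ n, N ≤ n → G n = b + 1} ⊆ Cy (Finset.Ico N (N + k)) (fun _ => b + 1) := by
      intro G hG x hx
      simp only [Finset.mem_Ico] at hx
      exact hG x hx.1
    have := (measure_mono hsub).trans_eq (mu_Cy _ _)
    rw [Nat.card_Ico] at this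
    simp only [Nat.add_sub_cancel_left] at this
    rw [← ENNReal.inv_pow] at hk
    exact absurd this hk.not_ge
  have hsub : {G : X | {n | G n = b}.Finite} ⊆ ⋃ N : ℕ, {G : X | ∀ n, N ≤ n → G n = b + 1} := by
    intro G hG
    simp only [Set.mem_iUnion, Set.mem_setOf_eq]
    obtain ⟨N, hN⟩ := hG.bddAbove
    refine ⟨N + 1, fun n hn => ?_⟩
    rw [← zmod2_ne_iff]
    intro hb
    exact absurd (hN hb) (by omega)
  exact measure_mono_null hsub (by rw [measure_iUnion_null_iff]; exact Tnull)

lemma countable_computable : {D : ℕ → Finset ℕ | Computable D}.Countable := by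
  have key : ∀ D : {D : ℕ → Finset ℕ // Computable D}, ∃ c : Nat.Partrec.Code,
      ∀ n, c.eval n = Part.some (@Encodable.encode (Finset ℕ) Primcodable.toEncodable (D.1 n)) := by
    rintro ⟨D, hD⟩
    obtain ⟨c, hc⟩ := Nat.Partrec.Code.exists_code.1 hD
    refine ⟨c, fun n => ?_⟩
    rw [hc]
    simp
  choose c hc using key
  have hinj : Function.Injective c := by
    intro D D' h
    apply Subtype.ext
    funext n
    have h1 := hc D n
    have h2 := hc D' n
    rw [h] at h1
    have := (h1.symm.trans h2)
    exact Encodable.encode_injective (by simpa using this)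
  rw [← Set.countable_coe_iff]
  exact Function.Injective.countable (f := fun D : {D : ℕ → Finset ℕ // Computable D} => c D) hinj

noncomputable def ED (D : ℕ → Finset ℕ) (i : ℕ) : Set X :=
  if (D i).card ≤ 2 * i then ∅ else Cy (D i) (fun _ => 1)

lemma ED_bound (D : ℕ → Finset ℕ) (i : ℕ) : mu (ED D i) ≤ (2 : ENNReal)⁻¹ ^ i := by
  rw [ED]
  split
  · simp
  · rename_i hcard
    rw [mu_Cy, ← ENNReal.inv_pow]
    exact ENNReal.inv_le_inv.2 (pow_le_pow_right₀ one_le_two (show i ≤ (D i).card by omega))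

def blk (n j : ℕ) : Finset ℕ := Finset.Ico (j * (2 * n + 2)) ((j + 1) * (2 * n + 2))

lemma blk_card (n j : ℕ) : (blk n j).card = 2 * n + 2 := by
  rw [blk, Nat.card_Ico, Nat.succ_mul, Nat.add_sub_cancel_left]

def A (b : ZMod 2) (n : ℕ) : Set X := ⋃ j ∈ Finset.range (n + 1), Cy (blk n j) (fun _ => b + 1)

lemma A_bound (b : ZMod 2) (n : ℕ) : mu (A b n) ≤ (2 : ENNReal)⁻¹ ^ n := by
  refine (measure_biUnion_finset_le _ _).trans ?_
  have hterm : ∀ j ∈ Finset.range (n + 1),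
      mu (Cy (blk n j) (fun _ => b + 1)) = (2 : ENNReal)⁻¹ ^ (2 * n + 2) := by
    intro j _
    rw [mu_Cy, blk_card, ← ENNReal.inv_pow]
  rw [Finset.sum_congr rfl hterm, Finset.sum_const, Finset.card_range, nsmul_eq_mul]
  have h1 : ((n + 1 : ℕ) : ENNReal) ≤ 2 ^ (n + 2) := by
    have : (n + 1 : ℕ) ≤ 2 ^ (n + 2) := le_of_lt (by
      calc n + 1 ≤ n + n + 2 := by omega
      _ = 2 * (n + 1) := by ring
      _ < 2 ^ (n+2) := by
        have := Nat.lt_two_pow_self (n := n + 1)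
        calc 2 * (n+1) < 2 * 2 ^ (n+1) := by omega
        _ = 2 ^ (n+2) := by ring)
    exact_mod_cast this
  calc ((n + 1 : ℕ) : ENNReal) * (2 : ENNReal)⁻¹ ^ (2 * n + 2)
      ≤ 2 ^ (n + 2) * (2 : ENNReal)⁻¹ ^ (2 * n + 2) := by
        exact mul_le_mul_left h1 _
    _ = 2 ^ (n + 2) * ((2 : ENNReal)⁻¹ ^ (n + 2) * (2 : ENNReal)⁻¹ ^ n) := by
        rw [← pow_add]; ring_nf
    _ = (2 * (2 : ENNReal)⁻¹) ^ (n + 2) * (2 : ENNReal)⁻¹ ^ n := by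
        rw [mul_pow, mul_assoc]
    _ = (2 : ENNReal)⁻¹ ^ n := by
        rw [ENNReal.mul_inv_cancel two_ne_zero ENNReal.ofNat_ne_top, one_pow, one_mul]

open Classical in
lemma nth_lt_of_notA {G : X} {b : ZMod 2} {n : ℕ} (hG : G ∉ A b n) :
    Nat.nth (fun m => G m = b) n < (n + 1) * (2 * n + 2) := by
  classical
  have hw : ∀ j, j < n + 1 → ∃ x, x ∈ blk n j ∧ G x = b := by
    intro j hj
    by_contra h
    push_neg at h
    exact hG (Set.mem_biUnion (Finset.mem_range.2 hj)
      (fun x hx => zmod2_ne_iff.1 (h x hx)))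
  choose w hw1 hw2 using hw
  have hwlt : ∀ j (hj : j < n + 1), w j hj < (n + 1) * (2 * n + 2) := by
    intro j hj
    have := hw1 j hj
    rw [blk, Finset.mem_Ico] at this
    calc w j hj < (j + 1) * (2 * n + 2) := this.2
      _ ≤ (n + 1) * (2 * n + 2) := Nat.mul_le_mul_right _ (by omega)
  have hdiv : ∀ j (hj : j < n + 1), w j hj / (2 * n + 2) = j := by
    intro j hj
    have := hw1 j hj
    rw [blk, Finset.mem_Ico] at this
    exact Nat.div_eq_of_lt_le this.1 (by simpa [Nat.succ_mul] using this.2)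
  have hcount : n < Nat.count (fun m => G m = b) ((n + 1) * (2 * n + 2)) := by
    rw [Nat.count_eq_card_filter_range]
    have hle : (Finset.range (n + 1)).card ≤
        ((Finset.range ((n + 1) * (2 * n + 2))).filter (fun m => G m = b)).card := by
      apply Finset.card_le_card_of_injOn (fun j => if h : j < n + 1 then w j h else 0)
      · intro j hj
        rw [Finset.mem_coe, Finset.mem_range] at hj
        simp only [Finset.mem_coe, dif_pos hj]
        simp only [Finset.mem_filter, Finset.mem_range]
        exact ⟨hwlt j hj, hw2 j hj⟩
      · intro j hj j' hj' heq
        rw [Finset.mem_coe, Finset.mem_range] at hj hj'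
        simp only [dif_pos hj, dif_pos hj'] at heq
        rw [← hdiv j hj, ← hdiv j' hj', heq]
    rw [Finset.card_range] at hle
    omega
  exact Nat.nth_lt_of_lt_count hcount

end CINH

open CINH Filter MeasureTheory in
/-- There is a canonically immune set such that neither it nor its complement
is hyperimmune. -/
theorem exists_canonically_immune_not_hyperimmune :
    ∃ R : Set ℕ, CanonicallyImmune R ∧ ¬ Hyperimmune R ∧ ¬ Hyperimmune Rᶜ := by
  classical
  -- a "bad" null set in the Cantor group
  set Bad : Set X :=
    (⋃ D ∈ {D : ℕ → Finset ℕ | Computable D}, limsup (ED D) atTop) ∪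
    ((limsup (A 1) atTop ∪ limsup (A 0) atTop) ∪ {G : X | {n | G n = 1}.Finite}) with hBadDef
  have hnull : mu Bad = 0 := by
    refine measure_union_null ?_ (measure_union_null (measure_union_null ?_ ?_) ?_)
    · rw [measure_biUnion_null_iff countable_computable]
      intro D _
      exact limsup_null (ED_bound D)
    · exact limsup_null (A_bound 1)
    · exact limsup_null (A_bound 0)
    · exact fin_null 1
  have hex : ∃ G : X, G ∉ Bad := by
    by_contra h
    push_neg at h
    rw [Set.eq_univ_of_forall h, mu_univ] at hnull
    exact one_ne_zero hnull
  obtain ⟨G, hG⟩ := hex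
  have hG1 : ∀ D : ℕ → Finset ℕ, Computable D → G ∉ limsup (ED D) atTop := by
    intro D hD hmem
    exact hG (Or.inl (Set.mem_biUnion hD hmem))
  have hGA1 : G ∉ limsup (A 1) atTop := fun h => hG (Or.inr (Or.inl (Or.inl h)))
  have hGA0 : G ∉ limsup (A 0) atTop := fun h => hG (Or.inr (Or.inl (Or.inr h)))
  have hGinf : ¬ {n | G n = 1}.Finite := fun h => hG (Or.inr (Or.inr h))
  refine ⟨{n : ℕ | G n = 1}, ?_, ?_, ?_⟩
  · -- canonically immune
    refine ⟨fun i => 2 * i, ?_, hGinf, ?_⟩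
    · exact Primrec.to_comp (Primrec.nat_mul.comp (Primrec.const 2) Primrec.id)
    · intro D hD
      filter_upwards [not_mem_limsup (hG1 D hD.1)] with i hi hsub
      by_contra hcard
      push_neg at hcard
      rw [ED, if_neg (by omega)] at hi
      exact hi fun x hx => hsub hx
  · -- not hyperimmune
    rintro ⟨-, hfr⟩
    have hcomp : Computable (fun n : ℕ => (n + 1) * (2 * n + 2)) := by
      apply Primrec.to_comp
      exact Primrec.nat_mul.comp (Primrec.nat_add.comp Primrec.id (Primrec.const 1))
        (Primrec.nat_add.comp (Primrec.nat_mul.comp (Primrec.const 2) Primrec.id)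
          (Primrec.const 2))
    have hev : ∀ᶠ n in atTop,
        ¬ ((fun n : ℕ => (n + 1) * (2 * n + 2)) n < Nat.nth (· ∈ {n : ℕ | G n = 1}) n) := by
      filter_upwards [not_mem_limsup hGA1] with n hn
      have hlt : Nat.nth (fun m => G m = 1) n < (n + 1) * (2 * n + 2) := by
        apply nth_lt_of_notA
        simpa using hn
      omega
    obtain ⟨n, h1, h2⟩ := ((hfr _ hcomp).and_eventually hev).exists
    exact h2 h1
  · -- complement not hyperimmune
    rintro ⟨-, hfr⟩
    have hcomp : Computable (fun n : ℕ => (n + 1) * (2 * n + 2)) := by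
      apply Primrec.to_comp
      exact Primrec.nat_mul.comp (Primrec.nat_add.comp Primrec.id (Primrec.const 1))
        (Primrec.nat_add.comp (Primrec.nat_mul.comp (Primrec.const 2) Primrec.id)
          (Primrec.const 2))
    have hpeq : (· ∈ ({n : ℕ | G n = 1})ᶜ) = (fun m => G m = 0) := by
      funext m
      simp only [Set.mem_compl_iff, Set.mem_setOf_eq, eq_iff_iff]
      have h2 : (1 + 1 : ZMod 2) = 0 := by decide
      rw [← h2]
      exact zmod2_ne_iff
    have hev : ∀ᶠ n in atTop,
        ¬ ((fun n : ℕ => (n + 1) * (2 * n + 2)) n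
          < Nat.nth (· ∈ ({n : ℕ | G n = 1})ᶜ) n) := by
      filter_upwards [not_mem_limsup hGA0] with n hn
      have hlt : Nat.nth (fun m => G m = 0) n < (n + 1) * (2 * n + 2) := by
        apply nth_lt_of_notA
        simpa using hn
      have hlt2 : Nat.nth (· ∈ ({n : ℕ | G n = 1})ᶜ) n < (n + 1) * (2 * n + 2) := by
        rw [hpeq]; exact hlt
      omega
    obtain ⟨n, h1, h2⟩ := ((hfr _ hcomp).and_eventually hev).exists
    exact h2 h1
end

section
/- There exists a set R ⊆ ℕ which is hyperimmune but not canonically immune. -/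
/- ## Construction: a hyperimmune set that is not canonically immune -/

namespace HINCI

open Denumerable Encodable

/-- Code of the list `replicate j 0` under the denumerable encoding of `List ℕ`. -/
def zz : ℕ → ℕ := fun j => Nat.rec 0 (fun _ ih => Nat.pair 0 ih + 1) j

lemma zz_succ (j : ℕ) : zz (j + 1) = Nat.pair 0 (zz j) + 1 := rfl

lemma ofNat_zz (j : ℕ) : ofNat (List ℕ) (zz j) = List.replicate j 0 := by
  induction j with
  | zero => simp [zz]
  | succ j ih =>
    rw [zz_succ, ← Nat.succ_eq_add_one, Denumerable.list_ofNat_succ]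
    simp [Nat.unpair_pair, ih, List.replicate_succ]

/-- Code of the finite set `[N, N+w]` under the denumerable encoding of `Finset ℕ`. -/
def encF (N w : ℕ) : ℕ := Nat.pair N (zz w) + 1

lemma ofNat_list_encF (N w : ℕ) :
    ofNat (List ℕ) (encF N w) = N :: List.replicate w 0 := by
  rw [encF, ← Nat.succ_eq_add_one, Denumerable.list_ofNat_succ]
  simp [Nat.unpair_pair, ofNat_zz]

lemma raise'_replicate (w t : ℕ) :
    Denumerable.raise' (List.replicate w 0) t = List.range' t w := by
  induction w generalizing t with
  | zero => simp [Denumerable.raise']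
  | succ w ih =>
    rw [List.replicate_succ]
    show (0 + t) :: Denumerable.raise' (List.replicate w 0) (0 + t + 1) = List.range' t (w + 1)
    rw [Nat.zero_add, ih]
    rfl

/-- The interval `[N, N+w]` as a finite set, via its denumerable code. -/
def Blk (N w : ℕ) : Finset ℕ := ofNat (Finset ℕ) (encF N w)

lemma ofNat_finset_eq (n : ℕ) : ofNat (Finset ℕ) n =
    Finset.map (Denumerable.eqv ℕ).symm.toEmbedding
      (Denumerable.raise'Finset (ofNat (List ℕ) n) 0) :=
  ofNat_of_decode rfl

lemma Blk_val (N w : ℕ) : (Blk N w).val = ↑(List.range' N (w + 1)) := by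
  rw [Blk, ofNat_finset_eq, ofNat_list_encF, Finset.map_val]
  have h1 : Denumerable.raise' (N :: List.replicate w 0) 0 = List.range' N (w + 1) := by
    show (N + 0) :: Denumerable.raise' (List.replicate w 0) (N + 0 + 1) = _
    rw [Nat.add_zero, raise'_replicate]
    rfl
  have h2 : (Denumerable.raise'Finset (N :: List.replicate w 0) 0).val
      = (↑(List.range' N (w + 1)) : Multiset ℕ) := by
    show ((Denumerable.raise' (N :: List.replicate w 0) 0 : List ℕ) : Multiset ℕ) = _
    rw [h1]
  rw [h2, Multiset.map_coe]
  have hf : ⇑(Denumerable.eqv ℕ).symm.toEmbedding = id := rfl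
  rw [hf, List.map_id]

lemma card_Blk (N w : ℕ) : (Blk N w).card = w + 1 := by
  rw [Finset.card, Blk_val]
  simp

lemma mem_Blk {x N w : ℕ} : x ∈ Blk N w ↔ N ≤ x ∧ x < N + w + 1 := by
  rw [Finset.mem_def, Blk_val, Multiset.mem_coe, List.mem_range'_1]
  omega

open Classical in
/-- A (noncomputable) enumeration of partial computable functions as total functions. -/
noncomputable def T (e : ℕ) : ℕ → ℕ := fun n =>
  if h : ((Denumerable.ofNat Nat.Partrec.Code e).eval n).Dom
  then ((Denumerable.ofNat Nat.Partrec.Code e).eval n).get h else 0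

lemma exists_T {f : ℕ → ℕ} (hf : Computable f) : ∃ e, ∀ n, T e n = f n := by
  have h1 : Nat.Partrec (f : ℕ →. ℕ) := Partrec.nat_iff.1 hf.partrec
  obtain ⟨c, hc⟩ := Nat.Partrec.Code.exists_code.1 h1
  refine ⟨encode c, fun n => ?_⟩
  have h2 : Denumerable.ofNat Nat.Partrec.Code (encode c) = c := ofNat_encode c
  have h3 : (Denumerable.ofNat Nat.Partrec.Code (encode c)).eval n = Part.some (f n) := by
    rw [h2, hc]; rfl
  have hd : ((Denumerable.ofNat Nat.Partrec.Code (encode c)).eval n).Dom := by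
    rw [h3]; trivial
  have h4 : T (encode c) n
      = ((Denumerable.ofNat Nat.Partrec.Code (encode c)).eval n).get hd := by
    simp only [T]
    rw [dif_pos hd]
  rw [h4]
  exact Part.get_eq_of_mem (show f n ∈ _ by rw [h3]; exact Part.mem_some _) hd

/-- The state of the construction: (1 + max of blocks so far, number of elements so far). -/
noncomputable def stp : ℕ → ℕ × ℕ
  | 0 => (0, 0)
  | j + 1 =>
    let p := stp j
    let m := p.1 + T j.unpair.2 p.2 + 1
    let l := T j.unpair.1 (2 * m)
    (m + l + 1, p.2 + l + 1)

/-- Least element of the `j`-th block. -/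
noncomputable def mm (j : ℕ) : ℕ := (stp j).1 + T j.unpair.2 (stp j).2 + 1

/-- Length (minus one) of the `j`-th block. -/
noncomputable def ll (j : ℕ) : ℕ := T j.unpair.1 (2 * mm j)

/-- The `j`-th block. -/
noncomputable def blk (j : ℕ) : Finset ℕ := Blk (mm j) (ll j)

/-- The hyperimmune, not canonically immune set. -/
def RR : Set ℕ := {x | ∃ j, x ∈ blk j}

lemma stp_succ (j : ℕ) : stp (j + 1) = (mm j + ll j + 1, (stp j).2 + ll j + 1) := rfl

lemma stp1_lt_mm (j : ℕ) : (stp j).1 < mm j := by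
  rw [mm]; omega

lemma mem_blk {x j : ℕ} : x ∈ blk j ↔ mm j ≤ x ∧ x < mm j + ll j + 1 := by
  rw [blk]; exact mem_Blk

lemma card_blk (j : ℕ) : (blk j).card = ll j + 1 := card_Blk _ _

lemma stp1_mono : Monotone fun j => (stp j).1 := by
  apply monotone_nat_of_le_succ
  intro j
  have := stp1_lt_mm j
  rw [stp_succ]
  simp only []
  omega

lemma blk_between {i j : ℕ} (h : i < j) : mm i + ll i < mm j := by
  have h1 : (stp (i + 1)).1 = mm i + ll i + 1 := by rw [stp_succ]
  have h2 : (stp (i + 1)).1 ≤ (stp j).1 := stp1_mono h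
  have h3 := stp1_lt_mm j
  omega

lemma mm_strictMono : StrictMono mm := by
  intro i j h
  have := blk_between h
  omega

lemma stp2_ge (j : ℕ) : j ≤ (stp j).2 := by
  induction j with
  | zero => simp [stp]
  | succ j ih =>
    have : (stp (j + 1)).2 = (stp j).2 + ll j + 1 := by rw [stp_succ]
    omega

lemma stp1_ge (j : ℕ) : j ≤ (stp j).1 := by
  induction j with
  | zero => simp [stp]
  | succ j ih =>
    have h1 : (stp (j + 1)).1 = mm j + ll j + 1 := by rw [stp_succ]
    have h2 := stp1_lt_mm j
    omega

lemma mm_ge (j : ℕ) : j ≤ mm j := le_trans (stp1_ge j) (le_of_lt (stp1_lt_mm j))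

lemma stp2_mono : Monotone fun j => (stp j).2 := by
  apply monotone_nat_of_le_succ
  intro j
  have : (stp (j + 1)).2 = (stp j).2 + ll j + 1 := by rw [stp_succ]
  omega

lemma mm_mem_R (j : ℕ) : mm j ∈ RR := ⟨j, mem_blk.2 ⟨le_rfl, by omega⟩⟩

lemma filter_eq (j : ℕ) [DecidablePred (· ∈ RR)] :
    (Finset.range (mm j)).filter (· ∈ RR) = (Finset.range j).biUnion blk := by
  ext x
  simp only [Finset.mem_filter, Finset.mem_range, Finset.mem_biUnion]
  constructor
  · rintro ⟨hx, i, hi⟩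
    refine ⟨i, ?_, hi⟩
    by_contra hij
    push_neg at hij
    have h1 := mem_blk.1 hi
    have h2 : mm j ≤ mm i := mm_strictMono.monotone hij
    omega
  · rintro ⟨i, hij, hi⟩
    have h1 := mem_blk.1 hi
    have h2 := blk_between hij
    exact ⟨by omega, ⟨i, hi⟩⟩

lemma sum_ll (j : ℕ) : ∑ i ∈ Finset.range j, (ll i + 1) = (stp j).2 := by
  induction j with
  | zero => simp [stp]
  | succ j ih =>
    rw [Finset.sum_range_succ, ih, stp_succ]
    show (stp j).2 + (ll j + 1) = (stp j).2 + ll j + 1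
    omega

lemma count_R (j : ℕ) [DecidablePred (· ∈ RR)] :
    Nat.count (· ∈ RR) (mm j) = (stp j).2 := by
  rw [Nat.count_eq_card_filter_range]
  have hdisj : ∀ i ∈ Finset.range j, ∀ i' ∈ Finset.range j, i ≠ i' →
      Disjoint (blk i) (blk i') := by
    intro i _ i' _ hne
    rw [Finset.disjoint_left]
    intro x hx hx'
    have h1 := mem_blk.1 hx
    have h2 := mem_blk.1 hx'
    rcases Nat.lt_or_ge i i' with h | h
    · have := blk_between h; omega
    · have h' : i' < i := by omega
      have := blk_between h'; omega
  calc ((Finset.range (mm j)).filter (· ∈ RR)).card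
      = ((Finset.range j).biUnion blk).card := by rw [filter_eq]
    _ = ∑ i ∈ Finset.range j, (blk i).card := Finset.card_biUnion hdisj
    _ = ∑ i ∈ Finset.range j, (ll i + 1) := by
        apply Finset.sum_congr rfl
        intro i _
        exact card_blk i
    _ = (stp j).2 := sum_ll j

lemma nth_R (j : ℕ) : Nat.nth (· ∈ RR) ((stp j).2) = mm j := by
  classical
  have h1 := Nat.nth_count (p := (· ∈ RR)) (mm_mem_R j)
  rwa [count_R] at h1

lemma RR_infinite : RR.Infinite :=
  Set.infinite_of_injective_forall_mem (f := mm) mm_strictMono.injective mm_mem_R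

lemma RR_hyperimmune : Hyperimmune RR := by
  refine ⟨RR_infinite, fun f hf => ?_⟩
  obtain ⟨b, hb⟩ := exists_T hf
  rw [Filter.frequently_atTop]
  intro N
  set j := Nat.pair N b with hj
  refine ⟨(stp j).2, le_trans (le_trans (Nat.left_le_pair N b) (stp2_ge j)) le_rfl, ?_⟩
  rw [nth_R]
  have h1 : mm j = (stp j).1 + T b ((stp j).2) + 1 := by
    rw [mm, hj, Nat.unpair_pair]
  rw [h1, hb]
  omega

lemma RR_not_canonically_immune : ¬ CanonicallyImmune RR := by
  rintro ⟨h, hcomp, _, hD⟩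
  obtain ⟨a, ha⟩ := exists_T hcomp
  -- the numbering
  set u : ℕ → ℕ := fun i => if i % 2 = 1 then i / 2 else encF (i / 2) (h i) with hu_def
  set D : ℕ → Finset ℕ := fun i => ofNat (Finset ℕ) (u i) with hD_def
  have hzz : Primrec zz := by
    apply Primrec.nat_rec₁
    exact ((Primrec.succ.comp
      (Primrec₂.natPair.comp (Primrec.const 0) Primrec.snd))).to₂
  have hu : Computable u := by
    have hc : Computable fun i : ℕ => decide (i % 2 = 1) := by
      apply Primrec.to_comp
      exact PrimrecPred.decide (PrimrecRel.comp Primrec.eq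
        (Primrec.nat_mod.comp Primrec.id (Primrec.const 2)) (Primrec.const 1))
    have hf : Computable fun i : ℕ => i / 2 :=
      (Primrec.nat_div.comp Primrec.id (Primrec.const 2)).to_comp
    have hg : Computable fun i : ℕ => encF (i / 2) (h i) := by
      have h1 : Computable fun i : ℕ => Nat.pair (i / 2) (zz (h i)) :=
        Primrec₂.natPair.to_comp.comp hf ((hzz.to_comp).comp hcomp)
      exact (Primrec.succ.to_comp).comp h1
    have := Computable.cond hc hf hg
    apply this.of_eq
    intro i
    by_cases hm : i % 2 = 1 <;> simp [hm, hu_def]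
  have hDcomp : Computable D := (Computable.ofNat (Finset ℕ)).comp hu
  have hDsurj : Function.Surjective D := by
    intro s
    obtain ⟨n, hn⟩ : ∃ n, ofNat (Finset ℕ) n = s := ⟨_, ofNat_encode s⟩
    refine ⟨2 * n + 1, ?_⟩
    have h1 : (2 * n + 1) % 2 = 1 := by omega
    have h2 : (2 * n + 1) / 2 = n := by omega
    rw [hD_def]
    simp only [hu_def, h1, h2, if_pos]
    exact hn
  have hfreq : ∃ᶠ i in Filter.atTop, ↑(D i) ⊆ RR ∧ h i < (D i).card := by
    rw [Filter.frequently_atTop]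
    intro N
    set j := Nat.pair a N with hj
    have hD2 : D (2 * mm j) = blk j := by
      have h1 : ¬ (2 * mm j) % 2 = 1 := by omega
      have h2 : 2 * mm j / 2 = mm j := by omega
      have hll : ll j = h (2 * mm j) := by
        rw [ll, hj, Nat.unpair_pair]
        exact ha _
      rw [hD_def]
      simp only [hu_def, h1, if_false, h2, if_neg h1]
      rw [blk, Blk, hll]
    refine ⟨2 * mm j, ?_, ?_, ?_⟩
    · have h1 : N ≤ j := Nat.right_le_pair a N
      have h2 := mm_ge j
      omega
    · rw [hD2]
      intro x hx
      exact ⟨j, hx⟩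
    · rw [hD2, card_blk]
      have hll : ll j = h (2 * mm j) := by
        rw [ll, hj, Nat.unpair_pair]
        exact ha _
      omega
  have hev := hD D ⟨hDcomp, hDsurj⟩
  obtain ⟨i, hi1, hi2⟩ := (hfreq.and_eventually hev).exists
  exact absurd (hi2 hi1.1) (not_le.2 hi1.2)

end HINCI

/-- There is a hyperimmune set which is not canonically immune. -/
theorem exists_hyperimmune_not_canonically_immune :
    ∃ R : Set ℕ, Hyperimmune R ∧ ¬ CanonicallyImmune R :=
  ⟨HINCI.RR, HINCI.RR_hyperimmune, HINCI.RR_not_canonically_immune⟩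
end

section
/- Every canonically immune set is immune, i.e., contains no infinite computably enumerable subset. -/
namespace CIAux
open Nat.Partrec (Code)
open Nat.Partrec.Code

/-- Stage-`s` approximation to the domain of `c`, as a list. -/
def stageList (c : Code) (s : ℕ) : List ℕ :=
  (List.range s).filter (fun n => (evaln s c n).isSome)

theorem stageList_sorted (c : Code) (s : ℕ) : (stageList c s).Pairwise (· < ·) :=
  (List.pairwise_lt_range : (List.range s).Pairwise (· < ·)).sublist List.filter_sublist

theorem stageList_nodup (c : Code) (s : ℕ) : (stageList c s).Nodup :=
  (stageList_sorted c s).nodup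

theorem mem_stageList {c : Code} {s n : ℕ} :
    n ∈ stageList c s ↔ (evaln s c n).isSome := by
  simp only [stageList, List.mem_filter, List.mem_range, and_iff_right_iff_imp]
  intro h
  obtain ⟨x, hx⟩ := Option.isSome_iff_exists.1 h
  exact evaln_bound hx

theorem mem_stageList_dom {c : Code} {s n : ℕ} (h : n ∈ stageList c s) :
    (c.eval n).Dom := by
  obtain ⟨x, hx⟩ := Option.isSome_iff_exists.1 (mem_stageList.1 h)
  exact Part.dom_iff_mem.2 ⟨x, evaln_sound hx⟩

theorem stageList_len_unbounded {c : Code} (hinf : {n | (c.eval n).Dom}.Infinite) (m : ℕ) :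
    ∃ s, m < (stageList c s).length := by
  classical
  obtain ⟨t, ht, htc⟩ := hinf.exists_subset_card_eq (m + 1)
  have hex : ∀ n ∈ t, ∃ k, (evaln k c n).isSome := by
    intro n hn
    obtain ⟨x, hx⟩ := Part.dom_iff_mem.1 (ht hn)
    obtain ⟨k, hk⟩ := evaln_complete.1 hx
    exact ⟨k, Option.isSome_iff_exists.2 ⟨x, hk⟩⟩
  set K : ℕ → ℕ := fun n => if hn : ∃ k, (evaln k c n).isSome then Nat.find hn else 0 with hK
  refine ⟨t.sup K, ?_⟩
  have hsub : t ⊆ (stageList c (t.sup K)).toFinset := by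
    intro n hn
    rw [List.mem_toFinset, mem_stageList]
    have h1 : (evaln (K n) c n).isSome := by
      rw [hK]; simp only [hex n hn, dif_pos]
      exact Nat.find_spec (hex n hn)
    obtain ⟨x, hx⟩ := Option.isSome_iff_exists.1 h1
    exact Option.isSome_iff_exists.2 ⟨x, evaln_mono (Finset.le_sup hn) hx⟩
  calc m < t.card := by omega
    _ ≤ (stageList c (t.sup K)).toFinset.card := Finset.card_le_card hsub
    _ ≤ (stageList c (t.sup K)).length := (stageList c (t.sup K)).toFinset_card_le

theorem lower'_foldl (l : List ℕ) : ∀ (acc : List ℕ) (n : ℕ),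
    (l.foldl (fun (p : List ℕ × ℕ) m => (p.1 ++ [m - p.2], m + 1)) (acc, n)).1
      = acc ++ Denumerable.lower' l n := by
  induction l with
  | nil => intro acc n; simp [Denumerable.lower']
  | cons m l ih =>
    intro acc n
    simp only [List.foldl_cons, Denumerable.lower', ih]
    simp

theorem primrec_lower0 : Primrec (fun l : List ℕ => Denumerable.lower' l 0) := by
  have hf : Primrec (fun l : List ℕ =>
      (l.foldl (fun (p : List ℕ × ℕ) m => (p.1 ++ [m - p.2], m + 1)) (([] : List ℕ), 0)).1) := by
    refine Primrec.fst.comp ?_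
    have h2 : Primrec₂ (fun (_ : List ℕ) (q : (List ℕ × ℕ) × ℕ) =>
        ((q.1.1 ++ [q.2 - q.1.2], q.2 + 1) : List ℕ × ℕ)) := by
      refine Primrec.pair ?_ ?_
      · exact (Primrec.list_concat.comp (Primrec.fst.comp (Primrec.fst.comp Primrec.snd))
          ((Primrec.nat_sub.comp (Primrec.snd.comp Primrec.snd)
            (Primrec.snd.comp (Primrec.fst.comp Primrec.snd)))))
      · exact Primrec.succ.comp (Primrec.snd.comp Primrec.snd)
    exact (Primrec.list_foldl (Primrec.id (α := List ℕ))
      (Primrec.const ((([] : List ℕ), 0) : List ℕ × ℕ)) h2).of_eq fun l => by simp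
  exact hf.of_eq fun l => by rw [lower'_foldl]; simp

theorem filterMap_if {p : ℕ → Bool} : ∀ l : List ℕ,
    l.filterMap (fun n => if p n then some n else none) = l.filter p := by
  intro l
  induction l with
  | nil => rfl
  | cons a l ih => by_cases h : p a <;> simp [h, ih]

theorem primrec_stageList (c : Code) : Primrec (stageList c) := by
  have h1 : Primrec (fun (p : ℕ × ℕ) => (evaln p.1 c p.2).isSome) := by
    have := Nat.Partrec.Code.primrec_evaln
    exact (Primrec.option_isSome.comp
      (this.comp (((Primrec.fst).pair (Primrec.const c)).pair Primrec.snd)))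
  have : Primrec (fun s : ℕ => (List.range s).filterMap
      (fun n => if (evaln s c n).isSome then some n else none)) := by
    refine Primrec.listFilterMap (Primrec.list_range) ?_
    exact Primrec.ite (Primrec.eq.comp (h1.comp Primrec.id) (Primrec.const true))
      (Primrec.option_some.comp Primrec.snd) (Primrec.const none)
  refine this.of_eq fun s => ?_
  rw [stageList, filterMap_if]

/-- decoding the code of `lower' L 0` recovers `L.toFinset` for sorted `L`. -/
theorem ofNat_finset_encode_lower {L : List ℕ} (hL : L.Pairwise (· < ·)) :
    Denumerable.ofNat (Finset ℕ) (Encodable.encode (Denumerable.lower' L 0)) = L.toFinset := by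
  have h0 : Denumerable.ofNat (Finset ℕ) (Encodable.encode (Denumerable.lower' L 0))
      = Finset.map (Denumerable.eqv ℕ).symm.toEmbedding
        (Denumerable.raise'Finset (Denumerable.ofNat (List ℕ)
          (Encodable.encode (Denumerable.lower' L 0))) 0) := rfl
  rw [h0, Denumerable.ofNat_encode]
  ext x
  have hr : Denumerable.raise' (Denumerable.lower' L 0) 0 = L :=
    Denumerable.raise_lower' (fun m _ => Nat.zero_le m) hL.sortedLT
  simp only [Finset.mem_map, List.mem_toFinset]
  constructor
  · rintro ⟨y, hy, rfl⟩
    have : y ∈ Denumerable.raise' (Denumerable.lower' L 0) 0 := by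
      exact hy
    rw [hr] at this
    exact this
  · intro hx
    refine ⟨x, ?_, rfl⟩
    show x ∈ (Denumerable.raise'Finset (Denumerable.lower' L 0) 0).val
    rw [show (Denumerable.raise'Finset (Denumerable.lower' L 0) 0).val
        = (Denumerable.raise' (Denumerable.lower' L 0) 0 : Multiset ℕ) from rfl, hr]
    simpa using hx

end CIAux

open CIAux

/-- Every canonically immune set is immune: it is infinite and contains no infinite
c.e. subset. -/
theorem canonically_immune_immune :
    ∀ R : Set ℕ, CanonicallyImmune R →
      R.Infinite ∧ ∀ e : ℕ, (WSet e).Infinite → ¬ WSet e ⊆ R := by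
  classical
  rintro R ⟨h, hcomp, hRinf, hmod⟩
  refine ⟨hRinf, ?_⟩
  intro e hWinf hsub
  set c := Denumerable.ofNat Nat.Partrec.Code e with hc
  have hinf' : {n | (c.eval n).Dom}.Infinite := hWinf
  have H : ∀ i, ∃ s, h i < (stageList c s).length := fun i =>
    stageList_len_unbounded hinf' (h i)
  set g : ℕ → ℕ := fun i => Nat.find (H i) with hgdef
  set cf : ℕ → ℕ := fun i => if i % 2 = 0 then i / 2
    else Encodable.encode (Denumerable.lower' (stageList c (g i)) 0) with hcfdef
  set D : ℕ → Finset ℕ := fun i => Denumerable.ofNat (Finset ℕ) (cf i) with hDdef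
  -- computability of g
  have hplen : Computable (fun s => (stageList c s).length) :=
    (Primrec.list_length.comp (primrec_stageList c)).to_comp
  have hp2 : Computable₂ (fun i s => decide (h i < (stageList c s).length)) := by
    have : Primrec₂ (fun a b : ℕ => decide (a < b)) := Primrec.nat_lt.decide
    exact this.to_comp.comp (hcomp.comp Computable.fst) (hplen.comp Computable.snd)
  have hgp : Partrec (fun i => (Part.some (g i) : Part ℕ)) := by
    have hrf := Partrec.rfind (p := fun i s =>
      (Part.some (decide (h i < (stageList c s).length)) : Part Bool)) hp2.partrec₂
    refine hrf.of_eq fun i => ?_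
    apply Part.eq_some_iff.2
    apply Nat.mem_rfind.2
    constructor
    · simp [hgdef, Nat.find_spec (H i)]
    · intro m hm
      simp only [Part.mem_some_iff]
      simpa using Nat.find_min (H i) hm
  have hg : Computable g := hgp
  -- computability of cf
  have hcf : Computable cf := by
    have hbr : Computable (fun i =>
        Encodable.encode (Denumerable.lower' (stageList c (g i)) 0)) :=
      (Primrec.encode.comp (primrec_lower0.comp (primrec_stageList c))).to_comp.comp hg
    have hcond : Computable (fun i => cond (decide (i % 2 = 0)) (i / 2)
        (Encodable.encode (Denumerable.lower' (stageList c (g i)) 0))) := by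
      refine Computable.cond ?_ ?_ hbr
      · exact (Primrec.eq.comp (Primrec.nat_mod.comp Primrec.id (Primrec.const 2))
          (Primrec.const 0)).decide.to_comp
      · exact (Primrec.nat_div.comp Primrec.id (Primrec.const 2)).to_comp
    refine hcond.of_eq fun i => ?_
    by_cases hi : i % 2 = 0 <;> simp [hcfdef, hi]
  have hD : Computable D := (Primrec.ofNat (Finset ℕ)).to_comp.comp hcf
  have hDsurj : Function.Surjective D := by
    intro s
    set n := @Encodable.encode (Finset ℕ) Denumerable.toEncodable s with hn
    refine ⟨2 * n, ?_⟩
    have h1 : (2 * n) % 2 = 0 := by omega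
    have h2 : (2 * n) / 2 = n := by omega
    simp only [hDdef, hcfdef, h1, if_pos, h2]
    exact Denumerable.ofNat_encode s
  obtain ⟨N, hN⟩ := Filter.eventually_atTop.1 (hmod D ⟨hD, hDsurj⟩)
  set i := 2 * N + 1 with hidef
  have hodd : ¬ (i % 2 = 0) := by omega
  have hDi : D i = (stageList c (g i)).toFinset := by
    rw [hDdef]
    simp only [hcfdef, if_neg hodd]
    exact ofNat_finset_encode_lower (stageList_sorted c (g i))
  have hsubR : ↑(D i) ⊆ R := by
    rw [hDi]
    intro x hx
    have hx' : x ∈ stageList c (g i) := by simpa using hx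
    exact hsub (mem_stageList_dom hx')
  have hcard : (D i).card = (stageList c (g i)).length := by
    rw [hDi]
    exact List.toFinset_card_of_nodup (stageList_nodup c (g i))
  have hlt : h i < (D i).card := by
    rw [hcard]
    exact Nat.find_spec (H i)
  have := hN i (by omega) hsubR
  omega
end
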